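/- Suppose σ : ℝ → ℝ is a non-affine polynomial. Let K ⊆ ℝⁿ be compact and f : K → ℝ continuous. Then for every ε > 0 there is a function g : ℝⁿ → ℝ represented by a σ-activated neural network with binary-truncated inputs of width 6 such that |f(x) − g(x)| < ε for all x ∈ K. -/

import Mathlib

open scoped BigOperators
open MeasureTheory
open scoped Classical

/-- A feedforward neural network, given by a number of affine layers (`depth`),
layer dimensions (`dims i` is the dimension of the output of the `i`-th affine map,
with `dims 0` the input dimension; the output layer has dimension 1), weights and biases.
Data beyond the relevant indices is junk. -/
structure NeuralNet where
  depth : ℕ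
  dims : ℕ → ℕ
  weight : ℕ → ℕ → ℕ → ℝ
  bias : ℕ → ℕ → ℝ

namespace NeuralNet

/-- Output of the `i`-th hidden layer (layer `0` is the input itself),
where the activation `σ` is applied entrywise after each affine map. -/
def hidden (σ : ℝ → ℝ) (net : NeuralNet) (x : ℕ → ℝ) : ℕ → ℕ → ℝ
  | 0 => x
  | i + 1 => fun r =>
      σ ((∑ c ∈ Finset.range (net.dims i),
            net.weight (i + 1) r c * hidden σ net x i c) + net.bias (i + 1) r)

/-- The (scalar) output of the network: the final affine map `A_depth`
applied, without activation, to the last hidden layer. -/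
def output (σ : ℝ → ℝ) (net : NeuralNet) (x : ℕ → ℝ) : ℝ :=
  (∑ c ∈ Finset.range (net.dims (net.depth - 1)),
    net.weight net.depth 0 c * hidden σ net x (net.depth - 1) c) + net.bias net.depth 0

/-- The width of a network: the maximal dimension of a hidden layer. -/
def width (net : NeuralNet) : ℕ :=
  (Finset.Icc 1 (net.depth - 1)).sup net.dims

/-- The total number of (hidden) nodes of a network. -/
def totalNodes (net : NeuralNet) : ℕ :=
  ∑ i ∈ Finset.Icc 1 (net.depth - 1), net.dims i

/-- `net` represents the function `f : ℝ^d → ℝ` with activation `σ`. -/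
def Represents (σ : ℝ → ℝ) (net : NeuralNet) {d : ℕ} (f : (Fin d → ℝ) → ℝ) : Prop :=
  1 ≤ net.depth ∧ net.dims 0 = d ∧
    ∀ x : Fin d → ℝ,
      net.output σ (fun i => if h : i < d then x ⟨i, h⟩ else 0) = f x

/-- `net` represents the function `f : ℝ^d → ℝ` with activation `σ`, as a network with
truncated inputs: each input coordinate `x` is first replaced by `⌊base ^ κ * x⌋`. -/
def RepresentsTrunc (σ : ℝ → ℝ) (net : NeuralNet) (base : ℝ) {d : ℕ}
    (f : (Fin d → ℝ) → ℝ) : Prop :=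
  ∃ κ : ℤ, 1 ≤ net.depth ∧ net.dims 0 = d ∧
    ∀ x : Fin d → ℝ,
      net.output σ (fun i => if h : i < d then (⌊base ^ κ * x ⟨i, h⟩⌋ : ℝ) else 0) = f x

end NeuralNet

/-- The ReLU activation function. -/
def relu : ℝ → ℝ := fun t => max t 0

/-- `σ` has the density property: for every dimension `d`, the span of
`{x ↦ σ (w ⬝ x - θ)}` is dense in `C(ℝ^d)` for uniform convergence on compact sets. -/
def DensityProperty (σ : ℝ → ℝ) : Prop :=
  ∀ (d : ℕ) (f : (Fin d → ℝ) → ℝ), Continuous f →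
    ∀ K : Set (Fin d → ℝ), IsCompact K → ∀ ε : ℝ, 0 < ε →
      ∃ (N : ℕ) (c : Fin N → ℝ) (w : Fin N → Fin d → ℝ) (θ : Fin N → ℝ),
        ∀ x ∈ K, |f x - ∑ i : Fin N, c i * σ ((∑ j : Fin d, w i j * x j) - θ i)| < ε

/-- `σ` is continuously differentiable at some point with a nonzero derivative there:
differentiable on a neighborhood of `α`, with derivative continuous at `α` and nonzero. -/
def ContDiffAtNonzeroDeriv (σ : ℝ → ℝ) : Prop :=
  ∃ α : ℝ, (∀ᶠ x in nhds α, DifferentiableAt ℝ σ x) ∧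
    ContinuousAt (deriv σ) α ∧ deriv σ α ≠ 0

/-- `σ` is a polynomial function. -/
def IsPolyFun (σ : ℝ → ℝ) : Prop :=
  ∃ p : Polynomial ℝ, ∀ x : ℝ, σ x = p.eval x

/-- `σ` is a non-affine polynomial function (degree at least 2). -/
def IsNonAffinePolyFun (σ : ℝ → ℝ) : Prop :=
  ∃ p : Polynomial ℝ, 2 ≤ p.natDegree ∧ ∀ x : ℝ, σ x = p.eval x


section Aux
open Polynomial Filter Topology
open Polynomial

/-- Key polynomial data: a point with nonzero first and second derivative, and
division identities. -/
theorem poly_key (p : Polynomial ℝ) (hdeg : 2 ≤ p.natDegree) :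
    ∃ (a : ℝ) (r₁ r₂ : Polynomial ℝ),
      (derivative p).eval a ≠ 0 ∧ (derivative (derivative p)).eval a ≠ 0 ∧
      (∀ s : ℝ, p.eval (a + s) - p.eval a = s * r₁.eval s) ∧
      r₁.eval 0 = (derivative p).eval a ∧
      (∀ s : ℝ, p.eval (a + s) + p.eval (a - s) - 2 * p.eval a = s ^ 2 * r₂.eval s) ∧
      r₂.eval 0 = (derivative (derivative p)).eval a := by
  -- second derivative nonzero polynomial
  have hd0 : p.natDegree ≠ 0 := by omega
  have hp2ne : derivative (derivative p) ≠ 0 := by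
    intro hz
    have hcoeff : (derivative (derivative p)).coeff (p.natDegree - 2) = 0 := by
      rw [hz]; simp
    rw [coeff_derivative, coeff_derivative] at hcoeff
    have h1 : p.natDegree - 2 + 1 = p.natDegree - 1 := by omega
    have h2 : p.natDegree - 1 + 1 = p.natDegree := by omega
    rw [h1, h2] at hcoeff
    have hpne : p ≠ 0 := fun h => hd0 (by simp [h])
    have hlc : p.coeff p.natDegree ≠ 0 := Polynomial.leadingCoeff_ne_zero.mpr hpne
    have : ((p.natDegree - 1 : ℕ) : ℝ) + 1 ≠ 0 := by positivity
    have : ((p.natDegree - 2 : ℕ) : ℝ) + 1 ≠ 0 := by positivity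
    rcases mul_eq_zero.mp hcoeff with h | h
    · rcases mul_eq_zero.mp h with h' | h'
      · exact hlc h'
      · exact ‹((p.natDegree - 1 : ℕ) : ℝ) + 1 ≠ 0› h'
    · exact ‹((p.natDegree - 2 : ℕ) : ℝ) + 1 ≠ 0› h
  have hp1ne : derivative p ≠ 0 := by
    intro hz; exact hp2ne (by rw [hz]; simp)
  -- a point where both are nonzero
  obtain ⟨a, ha⟩ : ∃ a : ℝ, (derivative p * derivative (derivative p)).eval a ≠ 0 := by
    by_contra hc
    push_neg at hc
    have := Polynomial.zero_of_eval_zero _ hc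
    exact (mul_ne_zero hp1ne hp2ne) this
  rw [Polynomial.eval_mul] at ha
  have ha1 : (derivative p).eval a ≠ 0 := fun h => ha (by rw [h, zero_mul])
  have ha2 : (derivative (derivative p)).eval a ≠ 0 := fun h => ha (by rw [h, mul_zero])
  -- P₁ and r₁
  set P₁ : Polynomial ℝ := p.comp (C a + X) - C (p.eval a) with hP₁
  have hP₁eval : ∀ s : ℝ, P₁.eval s = p.eval (a + s) - p.eval a := by
    intro s; simp [hP₁, Polynomial.eval_comp]
  have hP₁0 : P₁.coeff 0 = 0 := by
    rw [Polynomial.coeff_zero_eq_eval_zero, hP₁eval]; simp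
  have hP₁id : ∀ s : ℝ, P₁.eval s = s * P₁.divX.eval s := by
    intro s
    conv_lhs => rw [← Polynomial.X_mul_divX_add P₁]
    simp [hP₁0]
  have hder₁ : derivative P₁ = (derivative p).comp (C a + X) := by
    rw [hP₁, derivative_sub, derivative_comp]
    simp
  have hr₁0 : P₁.divX.eval 0 = (derivative p).eval a := by
    rw [← Polynomial.coeff_zero_eq_eval_zero, Polynomial.coeff_divX]
    have := Polynomial.coeff_derivative P₁ 0
    rw [hder₁] at this
    have h2 : ((derivative p).comp (C a + X)).coeff 0 = (derivative p).eval a := by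
      rw [Polynomial.coeff_zero_eq_eval_zero, Polynomial.eval_comp]; simp
    rw [h2] at this
    have : P₁.coeff 1 = (derivative p).eval a := by
      norm_num at this; linarith [this]
    exact this
  -- P₂ and r₂
  set P₂ : Polynomial ℝ := p.comp (C a + X) + p.comp (C a - X) - C (2 * p.eval a) with hP₂
  have hP₂eval : ∀ s : ℝ, P₂.eval s = p.eval (a + s) + p.eval (a - s) - 2 * p.eval a := by
    intro s; simp [hP₂, Polynomial.eval_comp]
  have hP₂0 : P₂.coeff 0 = 0 := by
    rw [Polynomial.coeff_zero_eq_eval_zero, hP₂eval]; ring_nf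
  have hder₂ : derivative P₂ =
      (derivative p).comp (C a + X) - (derivative p).comp (C a - X) := by
    rw [hP₂, derivative_sub, derivative_add, derivative_comp, derivative_comp]
    simp
    ring
  have hP₂1 : P₂.coeff 1 = 0 := by
    have h2 : (derivative P₂).coeff 0 = 0 := by
      rw [hder₂, Polynomial.coeff_zero_eq_eval_zero]
      simp [Polynomial.eval_comp]
    have h3 := Polynomial.coeff_derivative P₂ 0
    rw [h2] at h3
    norm_num at h3
    linarith
  have hP₂2 : P₂.coeff 2 = (derivative (derivative p)).eval a := by
    have hdd : derivative (derivative P₂) =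
        (derivative (derivative p)).comp (C a + X) +
          (derivative (derivative p)).comp (C a - X) := by
      rw [hder₂, derivative_sub, derivative_comp, derivative_comp]
      simp
      try ring
    have h0 : (derivative (derivative P₂)).coeff 0 = 2 * (derivative (derivative p)).eval a := by
      rw [hdd, Polynomial.coeff_zero_eq_eval_zero]
      simp [Polynomial.eval_comp]
      try ring
    have h1 := Polynomial.coeff_derivative (derivative P₂) 0
    have h2 := Polynomial.coeff_derivative P₂ 1
    rw [h0] at h1
    norm_num at h1 h2
    nlinarith [h1, h2]
  have hP₂id : ∀ s : ℝ, P₂.eval s = s ^ 2 * P₂.divX.divX.eval s := by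
    intro s
    have e1 : P₂ = X * P₂.divX := by
      conv_lhs => rw [← Polynomial.X_mul_divX_add P₂]; rw [hP₂0]
      simp
    have e0 : P₂.divX.coeff 0 = 0 := by rw [Polynomial.coeff_divX]; exact hP₂1
    have e2 : P₂.divX = X * P₂.divX.divX := by
      conv_lhs => rw [← Polynomial.X_mul_divX_add P₂.divX]; rw [e0]
      simp
    conv_lhs => rw [e1, e2]
    simp; ring
  have hr₂0 : P₂.divX.divX.eval 0 = (derivative (derivative p)).eval a := by
    rw [← Polynomial.coeff_zero_eq_eval_zero, Polynomial.coeff_divX, Polynomial.coeff_divX]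
    exact hP₂2
  exact ⟨a, P₁.divX, P₂.divX.divX, ha1, ha2,
    fun s => by rw [← hP₁eval, hP₁id],
    hr₁0,
    fun s => by rw [← hP₂eval, hP₂id],
    hr₂0⟩
open Polynomial Filter Topology

theorem gadgetA (p r₁ : Polynomial ℝ) (a p1 : ℝ) (hp1 : p1 ≠ 0)
    (hid : ∀ s : ℝ, p.eval (a + s) - p.eval a = s * r₁.eval s)
    (hr0 : r₁.eval 0 = p1)
    (u : ℝ → ℝ) (u₀ : ℝ) (hu : Tendsto u (𝓝[≠] 0) (𝓝 u₀)) :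
    Tendsto (fun h => (p.eval (a + h * u h) - p.eval a) / (h * p1)) (𝓝[≠] 0) (𝓝 u₀) := by
  have hh : Tendsto (fun h : ℝ => h) (𝓝[≠] 0) (𝓝 0) := tendsto_id.mono_left nhdsWithin_le_nhds
  have harg : Tendsto (fun h => h * u h) (𝓝[≠] 0) (𝓝 0) := by
    have := hh.mul hu; simpa using this
  have hr : Tendsto (fun h => r₁.eval (h * u h)) (𝓝[≠] 0) (𝓝 p1) := by
    have := (r₁.continuous.tendsto 0).comp harg
    simpa [hr0, Function.comp_def] using this
  have hmain : Tendsto (fun h => u h * r₁.eval (h * u h) / p1) (𝓝[≠] 0) (𝓝 u₀) := by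
    have := (hu.mul hr).div_const p1
    simpa [mul_div_assoc, mul_div_cancel_right₀ _ hp1] using this
  refine hmain.congr' ?_
  filter_upwards [eventually_mem_nhdsWithin] with h hne
  have hne' : h ≠ 0 := hne
  rw [hid]
  field_simp

theorem gadgetB (p r₂ : Polynomial ℝ) (a p2 : ℝ) (hp2 : p2 ≠ 0)
    (hid : ∀ s : ℝ, p.eval (a + s) + p.eval (a - s) - 2 * p.eval a = s ^ 2 * r₂.eval s)
    (hr0 : r₂.eval 0 = p2)
    (u w : ℝ → ℝ) (u₀ w₀ : ℝ) (hu : Tendsto u (𝓝[≠] 0) (𝓝 u₀))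
    (hw : Tendsto w (𝓝[≠] 0) (𝓝 w₀)) :
    Tendsto (fun h => (p.eval (a + h * (u h + w h)) + p.eval (a - h * (u h + w h))
        - p.eval (a + h * (u h - w h)) - p.eval (a - h * (u h - w h))) / (4 * h ^ 2 * p2))
      (𝓝[≠] 0) (𝓝 (u₀ * w₀)) := by
  have hh : Tendsto (fun h : ℝ => h) (𝓝[≠] 0) (𝓝 0) := tendsto_id.mono_left nhdsWithin_le_nhds
  have harg1 : Tendsto (fun h => h * (u h + w h)) (𝓝[≠] 0) (𝓝 0) := by
    have := hh.mul (hu.add hw); simpa using this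
  have harg2 : Tendsto (fun h => h * (u h - w h)) (𝓝[≠] 0) (𝓝 0) := by
    have := hh.mul (hu.sub hw); simpa using this
  have hr1 : Tendsto (fun h => r₂.eval (h * (u h + w h))) (𝓝[≠] 0) (𝓝 p2) := by
    have := (r₂.continuous.tendsto 0).comp harg1; simpa [hr0, Function.comp_def] using this
  have hr2 : Tendsto (fun h => r₂.eval (h * (u h - w h))) (𝓝[≠] 0) (𝓝 p2) := by
    have := (r₂.continuous.tendsto 0).comp harg2; simpa [hr0, Function.comp_def] using this
  have hmain : Tendsto
      (fun h => ((u h + w h) ^ 2 * r₂.eval (h * (u h + w h))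
        - (u h - w h) ^ 2 * r₂.eval (h * (u h - w h))) / (4 * p2))
      (𝓝[≠] 0) (𝓝 (u₀ * w₀)) := by
    have h1 : Tendsto (fun h => (u h + w h) ^ 2 * r₂.eval (h * (u h + w h))
        - (u h - w h) ^ 2 * r₂.eval (h * (u h - w h))) (𝓝[≠] 0)
        (𝓝 ((u₀ + w₀) ^ 2 * p2 - (u₀ - w₀) ^ 2 * p2)) :=
      (((hu.add hw).pow 2).mul hr1).sub (((hu.sub hw).pow 2).mul hr2)
    have := h1.div_const (4 * p2)
    have heq : ((u₀ + w₀) ^ 2 * p2 - (u₀ - w₀) ^ 2 * p2) / (4 * p2) = u₀ * w₀ := by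
      field_simp; ring
    rwa [heq] at this
  refine hmain.congr' ?_
  filter_upwards [eventually_mem_nhdsWithin] with h hne
  have hne' : (h : ℝ) ≠ 0 := hne
  have e1 : p.eval (a + h * (u h + w h)) + p.eval (a - h * (u h + w h)) - 2 * p.eval a
      = (h * (u h + w h)) ^ 2 * r₂.eval (h * (u h + w h)) := hid _
  have e2 : p.eval (a + h * (u h - w h)) + p.eval (a - h * (u h - w h)) - 2 * p.eval a
      = (h * (u h - w h)) ^ 2 * r₂.eval (h * (u h - w h)) := hid _
  have enum : p.eval (a + h * (u h + w h)) + p.eval (a - h * (u h + w h))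
      - p.eval (a + h * (u h - w h)) - p.eval (a - h * (u h - w h))
      = h ^ 2 * ((u h + w h) ^ 2 * r₂.eval (h * (u h + w h))
          - (u h - w h) ^ 2 * r₂.eval (h * (u h - w h))) := by
    nlinarith [e1, e2]
  rw [enum]
  field_simp

end Aux
section Net
open Polynomial Filter Topology NeuralNet

/-- A width-6 network implementing approximate Horner evaluation. -/
noncomputable def hornerNet (n : ℕ) (W : ℕ → ℝ) (L : ℕ) (c : ℕ → ℝ)
    (a h pa p1 p2 : ℝ) : NeuralNet where
  depth := L + 1
  dims := fun i => if i = 0 then n else 6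
  weight := fun j r k =>
    if j = 1 then
      (if r = 0 then h * W k
       else if r = 1 then -(h * W k)
       else if r = 2 then -(h * W k)
       else if r = 3 then h * W k
       else if r = 4 then h * W k
       else 0)
    else if j = L + 1 then
      (if r = 0 then
        (if k = 0 then 1/(4*h^2*p2) else if k = 1 then 1/(4*h^2*p2)
         else if k = 2 then -(1/(4*h^2*p2)) else if k = 3 then -(1/(4*h^2*p2)) else 0)
       else 0)
    else
      (if r = 0 then
         (if k = 0 then 1/(4*h*p2) else if k = 1 then 1/(4*h*p2)
          else if k = 2 then -(1/(4*h*p2)) else if k = 3 then -(1/(4*h*p2))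
          else if k = 4 then 1/p1 else 0)
       else if r = 1 then
         (if k = 0 then -(1/(4*h*p2)) else if k = 1 then -(1/(4*h*p2))
          else if k = 2 then 1/(4*h*p2) else if k = 3 then 1/(4*h*p2)
          else if k = 4 then -(1/p1) else 0)
       else if r = 2 then
         (if k = 0 then 1/(4*h*p2) else if k = 1 then 1/(4*h*p2)
          else if k = 2 then -(1/(4*h*p2)) else if k = 3 then -(1/(4*h*p2))
          else if k = 4 then -(1/p1) else 0)
       else if r = 3 then
         (if k = 0 then -(1/(4*h*p2)) else if k = 1 then -(1/(4*h*p2))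
          else if k = 2 then 1/(4*h*p2) else if k = 3 then 1/(4*h*p2)
          else if k = 4 then 1/p1 else 0)
       else if r = 4 then (if k = 4 then 1/p1 else 0)
       else 0)
  bias := fun j r =>
    if j = 1 then
      (if r = 0 then a + h * c L
       else if r = 1 then a - h * c L
       else if r = 2 then a + h * c L
       else if r = 3 then a - h * c L
       else if r = 4 then a
       else 0)
    else if j = L + 1 then (if r = 0 then c 0 else 0)
    else
      (if r = 0 then a + h * c (L - (j - 1)) - pa/p1
       else if r = 1 then a - h * c (L - (j - 1)) + pa/p1
       else if r = 2 then a + h * c (L - (j - 1)) + pa/p1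
       else if r = 3 then a - h * c (L - (j - 1)) - pa/p1
       else if r = 4 then a - pa/p1
       else 0)

/-- The ideal (approximate) register values of `hornerNet` (s, t) after `j` steps. -/
noncomputable def stseq (p : Polynomial ℝ) (a h pa p1 p2 : ℝ) (c : ℕ → ℝ) (L : ℕ)
    (t0 : ℝ) : ℕ → ℝ × ℝ
  | 0 => (c L, t0)
  | j + 1 =>
      ((p.eval (a + h * ((stseq p a h pa p1 p2 c L t0 j).1 + (stseq p a h pa p1 p2 c L t0 j).2))
          + p.eval (a - h * ((stseq p a h pa p1 p2 c L t0 j).1 + (stseq p a h pa p1 p2 c L t0 j).2))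
          - p.eval (a + h * ((stseq p a h pa p1 p2 c L t0 j).1 - (stseq p a h pa p1 p2 c L t0 j).2))
          - p.eval (a - h * ((stseq p a h pa p1 p2 c L t0 j).1 - (stseq p a h pa p1 p2 c L t0 j).2)))
          / (4 * h ^ 2 * p2) + c (L - (j + 1)),
        (p.eval (a + h * (stseq p a h pa p1 p2 c L t0 j).2) - pa) / (h * p1))

/-- The value of the six neurons of a hidden layer given the registers of the previous layer. -/
noncomputable def layerVals (p : Polynomial ℝ) (a h : ℝ) (st : ℝ × ℝ) : ℕ → ℝ := fun r =>
  if r = 0 then p.eval (a + h * (st.1 + st.2))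
  else if r = 1 then p.eval (a - h * (st.1 + st.2))
  else if r = 2 then p.eval (a + h * (st.1 - st.2))
  else if r = 3 then p.eval (a - h * (st.1 - st.2))
  else if r = 4 then p.eval (a + h * st.2)
  else p.eval 0

set_option maxHeartbeats 1600000 in
theorem hornerNet_layer (σ : ℝ → ℝ) (p : Polynomial ℝ) (hσ : ∀ x, σ x = p.eval x)
    (n : ℕ) (W : ℕ → ℝ) (L : ℕ) (c : ℕ → ℝ) (a h pa p1 p2 : ℝ)
    (hh : h ≠ 0) (hp1 : p1 ≠ 0) (hp2 : p2 ≠ 0)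
    (jj : ℕ) (hjj1 : jj ≠ 1) (hjj2 : jj ≠ L + 1) (st : ℝ × ℝ) (r : ℕ) :
    σ ((∑ k ∈ Finset.range 6,
        (hornerNet n W L c a h pa p1 p2).weight jj r k * layerVals p a h st k)
        + (hornerNet n W L c a h pa p1 p2).bias jj r)
      = layerVals p a h
          ((p.eval (a + h * (st.1 + st.2)) + p.eval (a - h * (st.1 + st.2))
              - p.eval (a + h * (st.1 - st.2)) - p.eval (a - h * (st.1 - st.2)))
              / (4 * h ^ 2 * p2) + c (L - (jj - 1)),
            (p.eval (a + h * st.2) - pa) / (h * p1)) r := by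
  rw [hσ]
  rcases Nat.lt_or_ge r 5 with hr | hr
  · interval_cases r <;>
    · simp only [hornerNet, layerVals, hjj1, hjj2, if_true, if_false, ite_false,
        Finset.sum_range_succ, Finset.sum_range_zero]
      norm_num
      congr 1
      field_simp
      ring
  · have h0 : r ≠ 0 := by omega
    have h1 : r ≠ 1 := by omega
    have h2 : r ≠ 2 := by omega
    have h3 : r ≠ 3 := by omega
    have h4 : r ≠ 4 := by omega
    simp [hornerNet, layerVals, h0, h1, h2, h3, h4, hjj1, hjj2, Finset.sum_range_succ]

theorem hornerNet_hidden (σ : ℝ → ℝ) (p : Polynomial ℝ) (hσ : ∀ x, σ x = p.eval x)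
    (n : ℕ) (W : ℕ → ℝ) (L : ℕ) (c : ℕ → ℝ) (a h pa p1 p2 : ℝ)
    (hh : h ≠ 0) (hp1 : p1 ≠ 0) (hp2 : p2 ≠ 0)
    (x : ℕ → ℝ) (t0 : ℝ) (ht0 : ∑ i ∈ Finset.range n, W i * x i = t0) :
    ∀ j, j + 1 ≤ L →
      hidden σ (hornerNet n W L c a h pa p1 p2) x (j + 1)
        = layerVals p a h (stseq p a h pa p1 p2 c L t0 j) := by
  have hs : ∑ k ∈ Finset.range n, h * W k * x k = h * t0 := by
    rw [← ht0, Finset.mul_sum]; exact Finset.sum_congr rfl fun k _ => by ring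
  have hs' : ∑ k ∈ Finset.range n, -(h * W k) * x k = -(h * t0) := by
    simp only [neg_mul, Finset.sum_neg_distrib, hs]
  intro j
  induction j with
  | zero =>
    intro hL
    funext r
    show σ ((∑ k ∈ Finset.range ((hornerNet n W L c a h pa p1 p2).dims 0),
        (hornerNet n W L c a h pa p1 p2).weight 1 r k * x k)
        + (hornerNet n W L c a h pa p1 p2).bias 1 r) = _
    have hdims : (hornerNet n W L c a h pa p1 p2).dims 0 = n := by simp [hornerNet]
    rw [hdims, hσ]
    rcases Nat.lt_or_ge r 5 with hr | hr
    · interval_cases r <;>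
      · simp only [hornerNet, layerVals, stseq, if_true, if_false]
        norm_num
        first
        | (congr 1; rw [hs]; ring)
        | (congr 1; rw [hs']; ring)
    · have h0 : r ≠ 0 := by omega
      have h1 : r ≠ 1 := by omega
      have h2 : r ≠ 2 := by omega
      have h3 : r ≠ 3 := by omega
      have h4 : r ≠ 4 := by omega
      simp [hornerNet, layerVals, h0, h1, h2, h3, h4]
  | succ j ih =>
    intro hL
    have hL' : j + 1 ≤ L := by omega
    funext r
    show σ ((∑ k ∈ Finset.range ((hornerNet n W L c a h pa p1 p2).dims (j + 1)),
        (hornerNet n W L c a h pa p1 p2).weight (j + 2) r k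
          * hidden σ (hornerNet n W L c a h pa p1 p2) x (j + 1) k)
        + (hornerNet n W L c a h pa p1 p2).bias (j + 2) r) = _
    have hdims : (hornerNet n W L c a h pa p1 p2).dims (j + 1) = 6 := by simp [hornerNet]
    rw [hdims, ih hL']
    have hne1 : j + 2 ≠ 1 := by omega
    have hne2 : j + 2 ≠ L + 1 := by omega
    exact hornerNet_layer σ p hσ n W L c a h pa p1 p2 hh hp1 hp2 (j + 2) hne1 hne2 _ r
theorem hornerNet_output (σ : ℝ → ℝ) (p : Polynomial ℝ) (hσ : ∀ x, σ x = p.eval x)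
    (n : ℕ) (W : ℕ → ℝ) (L : ℕ) (c : ℕ → ℝ) (a h pa p1 p2 : ℝ)
    (hh : h ≠ 0) (hp1 : p1 ≠ 0) (hp2 : p2 ≠ 0) (hL : 1 ≤ L)
    (x : ℕ → ℝ) (t0 : ℝ) (ht0 : ∑ i ∈ Finset.range n, W i * x i = t0) :
    output σ (hornerNet n W L c a h pa p1 p2) x = (stseq p a h pa p1 p2 c L t0 L).1 := by
  obtain ⟨L', rfl⟩ : ∃ L', L = L' + 1 := ⟨L - 1, by omega⟩
  have hdepth : (hornerNet n W (L' + 1) c a h pa p1 p2).depth = L' + 2 := rfl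
  rw [output, hdepth]
  have hd1 : L' + 2 - 1 = L' + 1 := rfl
  rw [hd1]
  have hdims : (hornerNet n W (L' + 1) c a h pa p1 p2).dims (L' + 1) = 6 := by
    simp [hornerNet]
  rw [hdims, hornerNet_hidden σ p hσ n W (L' + 1) c a h pa p1 p2 hh hp1 hp2 x t0 ht0 L'
    (le_refl _)]
  show (∑ k ∈ Finset.range 6,
      (hornerNet n W (L' + 1) c a h pa p1 p2).weight (L' + 2) 0 k
        * layerVals p a h (stseq p a h pa p1 p2 c (L' + 1) t0 L') k)
      + (hornerNet n W (L' + 1) c a h pa p1 p2).bias (L' + 2) 0 = _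
  have hne1 : L' + 2 ≠ 1 := by omega
  simp only [hornerNet, layerVals, stseq, hne1, if_false, ite_false, if_true, ite_true,
    Finset.sum_range_succ, Finset.sum_range_zero]
  norm_num
  ring
/-- The exact Horner recursion. -/
noncomputable def hornerSeq (c : ℕ → ℝ) (L : ℕ) (t0 : ℝ) : ℕ → ℝ
  | 0 => c L
  | j + 1 => hornerSeq c L t0 j * t0 + c (L - (j + 1))

theorem hornerSeq_eval (c : ℕ → ℝ) (L : ℕ) (t0 : ℝ) :
    ∀ j, j ≤ L → hornerSeq c L t0 j = ∑ i ∈ Finset.range (j + 1), c (L - j + i) * t0 ^ i := by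
  intro j
  induction j with
  | zero => intro _; simp [hornerSeq]
  | succ j ih =>
    intro hL
    have hL' : j ≤ L := by omega
    rw [hornerSeq, ih hL']
    conv_rhs => rw [Finset.sum_range_succ']
    rw [Finset.sum_mul]
    have : ∀ i ∈ Finset.range (j + 1),
        c (L - j + i) * t0 ^ i * t0 = c (L - (j + 1) + (i + 1)) * t0 ^ (i + 1) := by
      intro i _
      have : L - j + i = L - (j + 1) + (i + 1) := by omega
      rw [this, pow_succ]; ring
    rw [Finset.sum_congr rfl this]
    simp

theorem stseq_tendsto (p r₁ r₂ : Polynomial ℝ) (a pa p1 p2 : ℝ)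
    (hpa : pa = p.eval a) (hp1v : p1 = (Polynomial.derivative p).eval a)
    (hp2v : p2 = (Polynomial.derivative (Polynomial.derivative p)).eval a)
    (hp1 : p1 ≠ 0) (hp2 : p2 ≠ 0)
    (hid1 : ∀ s : ℝ, p.eval (a + s) - p.eval a = s * r₁.eval s)
    (hr10 : r₁.eval 0 = (Polynomial.derivative p).eval a)
    (hid2 : ∀ s : ℝ, p.eval (a + s) + p.eval (a - s) - 2 * p.eval a = s ^ 2 * r₂.eval s)
    (hr20 : r₂.eval 0 = (Polynomial.derivative (Polynomial.derivative p)).eval a)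
    (c : ℕ → ℝ) (L : ℕ) (t0 : ℝ) :
    ∀ j, Filter.Tendsto (fun h => (stseq p a h pa p1 p2 c L t0 j).1) (𝓝[≠] (0:ℝ))
        (𝓝 (hornerSeq c L t0 j))
      ∧ Filter.Tendsto (fun h => (stseq p a h pa p1 p2 c L t0 j).2) (𝓝[≠] (0:ℝ)) (𝓝 t0) := by
  intro j
  induction j with
  | zero =>
    constructor
    · simpa [stseq, hornerSeq] using tendsto_const_nhds
    · simpa [stseq] using tendsto_const_nhds
  | succ j ih =>
    obtain ⟨ihs, iht⟩ := ih
    constructor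
    · have hB := gadgetB p r₂ a p2 hp2 hid2 (by rw [hr20, hp2v])
        (fun h => (stseq p a h pa p1 p2 c L t0 j).1)
        (fun h => (stseq p a h pa p1 p2 c L t0 j).2)
        (hornerSeq c L t0 j) t0 ihs iht
      have := hB.add_const (c (L - (j + 1)))
      simpa [stseq, hornerSeq] using this
    · have hA := gadgetA p r₁ a p1 hp1 hid1 (by rw [hr10, hp1v])
        (fun h => (stseq p a h pa p1 p2 c L t0 j).2) t0 iht
      rw [← hpa] at hA
      simpa [stseq] using hA

end Net

/-- width-6 UAT with binary-truncated inputs, non-affine polynomial activation. -/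
theorem statement8 (σ : ℝ → ℝ) (hσ : IsNonAffinePolyFun σ)
    (n : ℕ) (K : Set (Fin n → ℝ)) (hK : IsCompact K)
    (f : (Fin n → ℝ) → ℝ) (hf : ContinuousOn f K) :
    ∀ ε : ℝ, 0 < ε →
      ∃ (net : NeuralNet) (g : (Fin n → ℝ) → ℝ),
        NeuralNet.RepresentsTrunc σ net 2 g ∧ net.width = 6 ∧
        ∀ x ∈ K, |f x - g x| < ε := by
  intro ε hε
  obtain ⟨p, hdeg, hσp⟩ := hσ
  obtain ⟨a, r₁, r₂, hp1a, hp2a, hid1, hr10, hid2, hr20⟩ := poly_key p hdeg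
  set pa := p.eval a with hpav
  set p1 := (Polynomial.derivative p).eval a with hp1v
  set p2 := (Polynomial.derivative (Polynomial.derivative p)).eval a with hp2v
  -- uniform continuity of f on K
  have huc := hK.uniformContinuousOn_of_continuous hf
  rw [Metric.uniformContinuousOn_iff] at huc
  obtain ⟨δ, hδ, hucd⟩ := huc (ε / 2) (by linarith)
  -- truncation scale
  obtain ⟨κ, hκ⟩ : ∃ k : ℕ, ((1:ℝ) / 2) ^ k < δ := exists_pow_lt_of_lt_one hδ (by norm_num)
  set c2 : ℝ := 2 ^ κ with hc2
  have hc2pos : 0 < c2 := by positivity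
  -- bound on K and on the truncated coordinates
  obtain ⟨R, hR⟩ := isBounded_iff_forall_norm_le.mp hK.isBounded
  obtain ⟨M, hM⟩ : ∃ M : ℕ, c2 * (max R 0) + 1 ≤ M := exists_nat_ge _
  set T : (Fin n → ℝ) → (Fin n → ℤ) := fun x i => ⌊c2 * x i⌋ with hT
  have hTbound : ∀ x ∈ K, ∀ i, -(M:ℤ) ≤ T x i ∧ T x i ≤ M := by
    intro x hx i
    have hxi : |x i| ≤ max R 0 := le_trans (norm_le_pi_norm x i) (le_max_of_le_left (hR x hx))
    have hz : |c2 * x i| ≤ c2 * max R 0 := by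
      rw [abs_mul, abs_of_pos hc2pos]
      exact mul_le_mul_of_nonneg_left hxi hc2pos.le
    have h1 : (T x i : ℝ) ≤ M := by
      calc (T x i : ℝ) ≤ c2 * x i := Int.floor_le _
        _ ≤ |c2 * x i| := le_abs_self _
        _ ≤ M := by nlinarith [abs_nonneg (c2 * x i)]
    have h2 : (-(M:ℝ)) ≤ (T x i : ℝ) := by
      have := Int.sub_one_lt_floor (c2 * x i)
      have : c2 * x i - 1 < (T x i : ℝ) := this
      have habs : -(c2 * max R 0) ≤ c2 * x i := by
        have := neg_abs_le (c2 * x i); nlinarith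
      nlinarith
    constructor
    · exact_mod_cast h2
    · exact_mod_cast h1
  -- the finite set of truncation patterns
  set S : Set (Fin n → ℤ) := T '' K with hS
  have hSfin : S.Finite := by
    apply Set.Finite.subset (Set.Finite.pi (fun i : Fin n => Set.finite_Icc (-(M:ℤ)) M))
    rintro v ⟨x, hx, rfl⟩
    intro i _
    exact ⟨(hTbound x hx i).1, (hTbound x hx i).2⟩
  set Sf : Finset (Fin n → ℤ) := hSfin.toFinset with hSf
  -- the encoding linear functional
  set W₀ : ℕ := 2 * M + 1 with hW₀
  set wvec : ℕ → ℝ := fun k => (W₀ : ℝ) ^ k with hwvec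
  set tmap : (Fin n → ℤ) → ℝ :=
    fun v => ∑ i : Fin n, (W₀ : ℝ) ^ (i : ℕ) * (v i : ℝ) with htmap
  -- injectivity of the encoding on S
  have hinj : Set.InjOn tmap ↑Sf := by
    intro v hv v' hv' heq
    simp only [hSf, Finset.mem_coe, Set.Finite.mem_toFinset] at hv hv'
    have hb : ∀ i, -(M:ℤ) ≤ v i ∧ v i ≤ M := by
      obtain ⟨x, hx, rfl⟩ := hv; exact hTbound x hx
    have hb' : ∀ i, -(M:ℤ) ≤ v' i ∧ v' i ≤ M := by
      obtain ⟨x, hx, rfl⟩ := hv'; exact hTbound x hx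
    have hFlt : ∀ (u : Fin n → ℤ), (∀ i, -(M:ℤ) ≤ u i ∧ u i ≤ M) →
        ∀ i, (u i + M).toNat < W₀ := by
      intro u hu i
      have h1 := (hu i).1
      have h2 := (hu i).2
      omega
    set F : Fin n → Fin W₀ := fun i => ⟨(v i + M).toNat, hFlt v hb i⟩ with hF
    set F' : Fin n → Fin W₀ := fun i => ⟨(v' i + M).toNat, hFlt v' hb' i⟩ with hF'
    have hcast : ∀ i, ((F i : ℕ) : ℝ) = (v i : ℝ) + M := by
      intro i
      have : ((v i + M).toNat : ℤ) = v i + M := Int.toNat_of_nonneg (by linarith [(hb i).1])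
      show (((v i + M).toNat : ℕ) : ℝ) = _
      exact_mod_cast congrArg (fun z : ℤ => (z : ℝ)) this
    have hcast' : ∀ i, ((F' i : ℕ) : ℝ) = (v' i : ℝ) + M := by
      intro i
      have : ((v' i + M).toNat : ℤ) = v' i + M := Int.toNat_of_nonneg (by linarith [(hb' i).1])
      show (((v' i + M).toNat : ℕ) : ℝ) = _
      exact_mod_cast congrArg (fun z : ℤ => (z : ℝ)) this
    have htv : ∀ u : Fin n → ℤ, tmap u = ∑ i : Fin n, (W₀:ℝ) ^ (i:ℕ) * (u i : ℝ) :=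
      fun u => rfl
    have hsum : (∑ i : Fin n, (F i : ℕ) * W₀ ^ (i : ℕ)) =
        (∑ i : Fin n, (F' i : ℕ) * W₀ ^ (i : ℕ)) := by
      have hreal : ((∑ i : Fin n, (F i : ℕ) * W₀ ^ (i : ℕ) : ℕ) : ℝ) =
          ((∑ i : Fin n, (F' i : ℕ) * W₀ ^ (i : ℕ) : ℕ) : ℝ) := by
        rw [Nat.cast_sum, Nat.cast_sum]
        calc ∑ i : Fin n, (((F i : ℕ) * W₀ ^ (i:ℕ) : ℕ) : ℝ)
            = ∑ i : Fin n, ((W₀:ℝ) ^ (i:ℕ) * (v i : ℝ) + (M:ℝ) * (W₀:ℝ) ^ (i:ℕ)) := by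
              apply Finset.sum_congr rfl; intro i _
              rw [Nat.cast_mul, Nat.cast_pow, hcast i]; ring
          _ = tmap v + ∑ i : Fin n, (M:ℝ) * (W₀:ℝ) ^ (i:ℕ) := by
              rw [Finset.sum_add_distrib, htv]
          _ = tmap v' + ∑ i : Fin n, (M:ℝ) * (W₀:ℝ) ^ (i:ℕ) := by rw [heq]
          _ = ∑ i : Fin n, ((W₀:ℝ) ^ (i:ℕ) * (v' i : ℝ) + (M:ℝ) * (W₀:ℝ) ^ (i:ℕ)) := by
              rw [Finset.sum_add_distrib, htv]
          _ = ∑ i : Fin n, (((F' i : ℕ) * W₀ ^ (i:ℕ) : ℕ) : ℝ) := by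
              apply Finset.sum_congr rfl; intro i _
              rw [Nat.cast_mul, Nat.cast_pow, hcast' i]; ring
      exact_mod_cast hreal
    have hFF : F = F' := by
      apply finFunctionFinEquiv.injective
      apply Fin.ext
      rw [finFunctionFinEquiv_apply, finFunctionFinEquiv_apply]
      exact hsum
    funext i
    have : (F i : ℕ) = (F' i : ℕ) := by rw [hFF]
    have h1 : ((v i + M).toNat : ℤ) = ((v' i + M).toNat : ℤ) := by exact_mod_cast this
    rw [Int.toNat_of_nonneg (by linarith [(hb i).1]),
      Int.toNat_of_nonneg (by linarith [(hb' i).1])] at h1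
    omega
  -- representatives and targets
  have hrep : ∀ v ∈ Sf, ∃ x, x ∈ K ∧ T x = v := by
    intro v hv
    rw [hSf, Set.Finite.mem_toFinset] at hv
    exact hv
  classical
  set xrep : (Fin n → ℤ) → (Fin n → ℝ) :=
    fun v => if hv : v ∈ Sf then (hrep v hv).choose else 0 with hxrep
  have hxrepK : ∀ v ∈ Sf, xrep v ∈ K ∧ T (xrep v) = v := by
    intro v hv
    rw [hxrep]
    simp only [hv, dif_pos]
    exact (hrep v hv).choose_spec
  set y : (Fin n → ℤ) → ℝ := fun v => f (xrep v) with hy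
  -- interpolation polynomial
  set q : Polynomial ℝ := Lagrange.interpolate Sf tmap y with hq
  set L : ℕ := max 1 q.natDegree with hL
  have hL1 : 1 ≤ L := le_max_left _ _
  set c : ℕ → ℝ := fun i => q.coeff i with hc
  -- the limit values at the nodes
  have hnode : ∀ v ∈ Sf, hornerSeq c L (tmap v) L = y v := by
    intro v hv
    rw [hornerSeq_eval c L (tmap v) L (le_refl _)]
    have h1 : q.natDegree < L + 1 := by
      have h2 : q.natDegree ≤ L := by rw [hL]; exact le_max_right _ _
      omega
    have h2 := Polynomial.eval_eq_sum_range' h1 (tmap v)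
    have h3 : Polynomial.eval (tmap v) q = y v := Lagrange.eval_interpolate_at_node y hinj hv
    rw [← h3, h2]
    apply Finset.sum_congr rfl
    intro i _
    have hii : L - L + i = i := by omega
    rw [hii]
  -- choose h small enough
  have hEV : ∀ᶠ h in nhdsWithin (0:ℝ) ({0}ᶜ),
      (∀ v ∈ Sf, |(stseq p a h pa p1 p2 c L (tmap v) L).1 - y v| < ε / 2) ∧ h ≠ 0 := by
    apply Filter.Eventually.and
    · rw [Filter.eventually_all_finset]
      intro v hv
      have ht := (stseq_tendsto p r₁ r₂ a pa p1 p2 hpav hp1v hp2v hp1a hp2a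
        hid1 hr10 hid2 hr20 c L (tmap v) L).1
      rw [hnode v hv] at ht
      have := ht (Metric.ball_mem_nhds (y v) (by linarith : (0:ℝ) < ε / 2))
      filter_upwards [this] with h hh
      rw [← Real.dist_eq]
      exact hh
    · exact eventually_mem_nhdsWithin
  obtain ⟨h, hEVh, hhne⟩ := hEV.exists
  -- the network
  set net : NeuralNet := hornerNet n wvec L c a h pa p1 p2 with hnet
  refine ⟨net, fun x => net.output σ
      (fun i => if hi : i < n then ((⌊(2:ℝ) ^ ((κ:ℕ):ℤ) * x ⟨i, hi⟩⌋ : ℤ) : ℝ) else 0),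
    ⟨((κ:ℕ):ℤ), by simp [hnet, hornerNet], by simp [hnet, hornerNet], fun x => rfl⟩, ?_, ?_⟩
  · -- width
    rw [NeuralNet.width]
    have hdepth : net.depth - 1 = L := rfl
    rw [hdepth]
    apply le_antisymm
    · apply Finset.sup_le
      intro i hi
      rw [Finset.mem_Icc] at hi
      have : i ≠ 0 := by omega
      simp [hnet, hornerNet, this]
    · have h1 : (1:ℕ) ∈ Finset.Icc 1 L := by
        rw [Finset.mem_Icc]; exact ⟨le_refl _, hL1⟩
      have := Finset.le_sup (f := net.dims) h1
      have hd1 : net.dims 1 = 6 := by simp [hnet, hornerNet]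
      omega
  · -- approximation
    intro x hx
    have hzpow : (2:ℝ) ^ ((κ:ℕ):ℤ) = c2 := by
      rw [hc2]; exact zpow_natCast 2 κ
    have hvS : T x ∈ Sf := by
      rw [hSf, Set.Finite.mem_toFinset, hS]
      exact ⟨x, hx, rfl⟩
    -- the net input sums to tmap (T x)
    have ht0 : ∑ i ∈ Finset.range n, wvec i *
        (if hi : i < n then ((⌊(2:ℝ) ^ ((κ:ℕ):ℤ) * x ⟨i, hi⟩⌋ : ℤ) : ℝ) else 0)
        = tmap (T x) := by
      rw [htmap, ← Fin.sum_univ_eq_sum_range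
        (fun k => wvec k * (if hi : k < n then
          ((⌊(2:ℝ) ^ ((κ:ℕ):ℤ) * x ⟨k, hi⟩⌋ : ℤ) : ℝ) else 0)) n]
      apply Finset.sum_congr rfl
      intro i _
      simp only [i.isLt, dif_pos, hwvec, hT, hzpow, Fin.eta]
    have hout : net.output σ
        (fun i => if hi : i < n then ((⌊(2:ℝ) ^ ((κ:ℕ):ℤ) * x ⟨i, hi⟩⌋ : ℤ) : ℝ) else 0)
        = (stseq p a h pa p1 p2 c L (tmap (T x)) L).1 := by
      rw [hnet]
      exact hornerNet_output σ p hσp n wvec L c a h pa p1 p2 hhne hp1a hp2a hL1 _ _ ht0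
    beta_reduce
    rw [hout]
    -- compare f x with y (T x) = f (xrep (T x))
    obtain ⟨hxrK, hxrT⟩ := hxrepK (T x) hvS
    have hdistK : dist x (xrep (T x)) < δ := by
      rw [dist_pi_lt_iff hδ]
      intro i
      have hfloor : ⌊c2 * x i⌋ = ⌊c2 * (xrep (T x)) i⌋ := by
        have : T (xrep (T x)) i = T x i := by rw [hxrT]
        exact (congrArg id this).symm
      have h1 : |c2 * x i - c2 * (xrep (T x)) i| < 1 :=
        Int.abs_sub_lt_one_of_floor_eq_floor hfloor
      have h2 : |x i - xrep (T x) i| < 1 / c2 := by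
        rw [lt_div_iff₀ hc2pos, mul_comm]
        have he : c2 * x i - c2 * xrep (T x) i = c2 * (x i - xrep (T x) i) := by ring
        rw [he, abs_mul, abs_of_pos hc2pos] at h1
        linarith
      have h3 : (1:ℝ) / c2 = (1/2) ^ κ := by
        rw [hc2, one_div, ← inv_pow]; norm_num
      rw [Real.dist_eq]
      calc |x i - xrep (T x) i| < 1 / c2 := h2
        _ = (1/2)^κ := h3
        _ < δ := hκ
    have hfe : |f x - f (xrep (T x))| < ε / 2 := by
      have := hucd x hx (xrep (T x)) hxrK hdistK
      rwa [Real.dist_eq] at this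
    have hge : |(stseq p a h pa p1 p2 c L (tmap (T x)) L).1 - y (T x)| < ε / 2 :=
      hEVh (T x) hvS
    have : f (xrep (T x)) = y (T x) := rfl
    calc |f x - (stseq p a h pa p1 p2 c L (tmap (T x)) L).1|
        = |(f x - f (xrep (T x))) - ((stseq p a h pa p1 p2 c L (tmap (T x)) L).1 - y (T x))| := by
          rw [this]; ring_nf
      _ ≤ |f x - f (xrep (T x))| + |(stseq p a h pa p1 p2 c L (tmap (T x)) L).1 - y (T x)| :=
          abs_sub _ _
      _ < ε / 2 + ε / 2 := add_lt_add hfe hge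
      _ = ε := by ring
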